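/- arXiv:2105.01309 — 2 statements merged into one kernel-verified Lean document; each statement's English description precedes it below -/
import Mathlib

section
/- For a compact set $E$ contained in a domain $G\subset\overline{\mathbb{R}}^n$ with $\mathrm{card}(\overline{\mathbb{R}}^n\setminus G)\ge 2$, the $\delta_G$-diameter of $E$ equals the $\delta_G$-diameter of its boundary: $\sup_{x,y\in E}\delta_G(x,y) = \sup_{x,y\in\partial E}\delta_G(x,y)$. -/
open Real Set OnePoint

/-- The chordal (spherical) metric on `ℝ̂ⁿ = ℝⁿ ∪ {∞}`. -/
noncomputable def chordal {n : ℕ} (x y : OnePoint (EuclideanSpace ℝ (Fin n))) : ℝ :=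
  Option.elim x
    (Option.elim y 0 (fun b => 1 / Real.sqrt (1 + ‖b‖ ^ 2)))
    (fun a => Option.elim y (1 / Real.sqrt (1 + ‖a‖ ^ 2))
      (fun b => dist a b / (Real.sqrt (1 + ‖a‖ ^ 2) * Real.sqrt (1 + ‖b‖ ^ 2))))


open Filter Topology

section basics
variable {n : ℕ}
local notation "V" => EuclideanSpace ℝ (Fin n)
local notation "X" => OnePoint (EuclideanSpace ℝ (Fin n))

lemma sq_pos (v : V) : (0:ℝ) < 1 + ‖v‖ ^ 2 := by positivity
lemma S_pos (v : V) : (0:ℝ) < Real.sqrt (1 + ‖v‖ ^ 2) := Real.sqrt_pos.2 (sq_pos v)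
lemma chordal_infty_infty : chordal (n := n) ∞ ∞ = 0 := rfl
lemma chordal_infty_coe (b : V) : chordal ∞ (b : X) = 1 / Real.sqrt (1 + ‖b‖ ^ 2) := rfl
lemma chordal_coe_infty (a : V) : chordal (a : X) ∞ = 1 / Real.sqrt (1 + ‖a‖ ^ 2) := rfl
lemma chordal_coe_coe (a b : V) :
    chordal (a : X) (b : X) = dist a b / (Real.sqrt (1 + ‖a‖ ^ 2) * Real.sqrt (1 + ‖b‖ ^ 2)) := rfl

lemma chordal_nonneg (x y : X) : 0 ≤ chordal x y := by
  induction x using OnePoint.rec <;> induction y using OnePoint.rec <;>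
    simp only [chordal_infty_infty, chordal_infty_coe, chordal_coe_infty, chordal_coe_coe] <;>
    positivity

lemma chordal_comm (x y : OnePoint (EuclideanSpace ℝ (Fin n))) : chordal x y = chordal y x := by
  induction x using OnePoint.rec <;> induction y using OnePoint.rec <;>
    simp only [chordal_infty_infty, chordal_infty_coe, chordal_coe_infty, chordal_coe_coe]
  rw [dist_comm, mul_comm]

noncomputable def Phi (x : X) : (EuclideanSpace ℝ (Fin n)) × ℝ :=
  Option.elim x (0, 1) (fun v => ((1 + ‖v‖ ^ 2)⁻¹ • v, ‖v‖ ^ 2 / (1 + ‖v‖ ^ 2)))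

lemma Phi_infty : Phi (n := n) ∞ = (0, 1) := rfl
lemma Phi_coe (v : V) : Phi (v : X) = ((1 + ‖v‖ ^ 2)⁻¹ • v, ‖v‖ ^ 2 / (1 + ‖v‖ ^ 2)) := rfl

noncomputable def myD {n : ℕ} (p q : (EuclideanSpace ℝ (Fin n)) × ℝ) : ℝ :=
  Real.sqrt (‖p.1 - q.1‖ ^ 2 + (p.2 - q.2) ^ 2)

lemma myD_def (p q : (EuclideanSpace ℝ (Fin n)) × ℝ) :
    myD p q = Real.sqrt (‖p.1 - q.1‖ ^ 2 + (p.2 - q.2) ^ 2) := rfl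

lemma chordal_eq (x y : X) : chordal x y = myD (Phi x) (Phi y) := by
  induction x using OnePoint.rec <;> induction y using OnePoint.rec
  · simp [chordal_infty_infty, Phi_infty, myD_def]
  · rename_i b
    have hq := sq_pos b
    rw [chordal_infty_coe, Phi_infty, Phi_coe, myD_def]
    simp only
    have harg : ‖(0:V) - (1 + ‖b‖ ^ 2)⁻¹ • b‖ ^ 2 + ((1:ℝ) - ‖b‖ ^ 2 / (1 + ‖b‖ ^ 2)) ^ 2
        = (1 / Real.sqrt (1 + ‖b‖ ^ 2)) ^ 2 := by
      simp only [zero_sub, norm_neg, norm_smul, norm_inv, Real.norm_eq_abs, abs_of_pos hq]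
      rw [div_pow, one_pow, Real.sq_sqrt hq.le]
      field_simp
      ring
    rw [harg, Real.sqrt_sq (by positivity)]
  · rename_i a
    have hq := sq_pos a
    rw [chordal_coe_infty, Phi_infty, Phi_coe, myD_def]
    simp only
    have harg : ‖(1 + ‖a‖ ^ 2)⁻¹ • a - (0:V)‖ ^ 2 + (‖a‖ ^ 2 / (1 + ‖a‖ ^ 2) - (1:ℝ)) ^ 2
        = (1 / Real.sqrt (1 + ‖a‖ ^ 2)) ^ 2 := by
      simp only [sub_zero, norm_smul, norm_inv, Real.norm_eq_abs, abs_of_pos hq]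
      rw [div_pow, one_pow, Real.sq_sqrt hq.le]
      field_simp
      ring
    rw [harg, Real.sqrt_sq (by positivity)]
  · rename_i a b
    have hp := sq_pos a
    have hq := sq_pos b
    rw [chordal_coe_coe, Phi_coe, Phi_coe, myD_def]
    simp only
    have h1 : ‖(1 + ‖a‖ ^ 2)⁻¹ • a - (1 + ‖b‖ ^ 2)⁻¹ • b‖ ^ 2
        = ((1 + ‖a‖ ^ 2)⁻¹) ^ 2 * ‖a‖ ^ 2
          - 2 * ((1 + ‖a‖ ^ 2)⁻¹ * (1 + ‖b‖ ^ 2)⁻¹) * (inner ℝ a b : ℝ)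
          + ((1 + ‖b‖ ^ 2)⁻¹) ^ 2 * ‖b‖ ^ 2 := by
      rw [norm_sub_sq_real, real_inner_smul_left, real_inner_smul_right, norm_smul, norm_smul]
      simp only [norm_inv, Real.norm_eq_abs, abs_of_pos hp, abs_of_pos hq]
      ring
    have h2 : dist a b ^ 2 = ‖a‖ ^ 2 - 2 * (inner ℝ a b : ℝ) + ‖b‖ ^ 2 := by
      rw [dist_eq_norm, norm_sub_sq_real]
    have harg : ‖(1 + ‖a‖ ^ 2)⁻¹ • a - (1 + ‖b‖ ^ 2)⁻¹ • b‖ ^ 2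
        + (‖a‖ ^ 2 / (1 + ‖a‖ ^ 2) - ‖b‖ ^ 2 / (1 + ‖b‖ ^ 2)) ^ 2
        = (dist a b / (Real.sqrt (1 + ‖a‖ ^ 2) * Real.sqrt (1 + ‖b‖ ^ 2))) ^ 2 := by
      rw [div_pow, mul_pow, Real.sq_sqrt hp.le, Real.sq_sqrt hq.le, h1, h2]
      field_simp
      ring
    rw [harg, Real.sqrt_sq (by positivity)]

lemma continuous_myD : Continuous fun p : ((EuclideanSpace ℝ (Fin n)) × ℝ) × ((EuclideanSpace ℝ (Fin n)) × ℝ) => myD p.1 p.2 := by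
  simp only [myD_def]
  fun_prop

set_option maxHeartbeats 1000000 in
lemma continuous_Phi : Continuous (Phi (n := n)) := by
  rw [continuous_iff_continuousAt]
  intro x
  induction x using OnePoint.rec
  · rw [OnePoint.continuousAt_infty']
    rw [Filter.coclosedCompact_eq_cocompact]
    have hPi : Phi (n := n) ∞ = ((0 : V), (1:ℝ)) := rfl
    rw [Function.comp_def]
    simp only [hPi, Phi_coe]
    have hn : Tendsto (fun v : V => ‖v‖) (cocompact V) atTop := tendsto_norm_cocompact_atTop
    apply Filter.Tendsto.prodMk_nhds
    · apply squeeze_zero_norm' (a := fun v : V => ‖v‖⁻¹)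
      · filter_upwards [hn.eventually_ge_atTop 1] with v hv
        have hq := sq_pos v
        simp only [norm_smul, norm_inv, Real.norm_eq_abs, abs_of_pos hq]
        rw [inv_mul_le_iff₀ hq, inv_eq_one_div, mul_one_div, le_div_iff₀ (by linarith)]
        nlinarith
      · exact hn.inv_tendsto_atTop
    · have h2 : Tendsto (fun v : V => (1 + ‖v‖ ^ 2)) (cocompact V) atTop :=
        tendsto_atTop_mono (fun v => (by nlinarith [sq_nonneg (‖v‖ - 1)] : ‖v‖ ≤ 1 + ‖v‖ ^ 2)) hn
      have h3 : Tendsto (fun v : V => 1 - (1 + ‖v‖ ^ 2)⁻¹) (cocompact V) (𝓝 1) := by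
        simpa using (tendsto_const_nhds (x := (1:ℝ)) (f := cocompact V)).sub h2.inv_tendsto_atTop
      apply h3.congr
      intro v
      have hq := sq_pos v
      field_simp
      ring
  · rename_i v
    rw [OnePoint.continuousAt_coe, Function.comp_def]
    have hc : Continuous fun w : V => Phi (w : X) := by
      have hd : Continuous fun w : V => (1 + ‖w‖ ^ 2)⁻¹ :=
        (continuous_const.add ((continuous_norm).pow 2)).inv₀ fun w => (sq_pos w).ne'
      simp only [Phi_coe]
      refine Continuous.prodMk (hd.smul continuous_id) ?_
      exact ((continuous_norm).pow 2).div (continuous_const.add ((continuous_norm).pow 2)) fun w => (sq_pos w).ne'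
    exact hc.continuousAt

set_option maxHeartbeats 2000000 in
lemma continuous_chordal : Continuous fun p : X × X => chordal p.1 p.2 := by
  have h : (fun p : X × X => chordal p.1 p.2) = fun p : X × X => myD (Phi p.1) (Phi p.2) :=
    funext fun p => chordal_eq p.1 p.2
  rw [h]
  simp only [myD_def]
  have h1 : Continuous fun p : X × X => Phi p.1 := continuous_Phi.comp continuous_fst
  have h2 : Continuous fun p : X × X => Phi p.2 := continuous_Phi.comp continuous_snd
  fun_prop

end basics


section inv
variable {n : ℕ}
local notation "V" => EuclideanSpace ℝ (Fin n)

noncomputable def invMap (α v : V) : V := (‖v - α‖ ^ 2)⁻¹ • (v - α)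
noncomputable def invBack (α q : V) : V := α + (‖q‖ ^ 2)⁻¹ • q

lemma norm_invMap {α v : V} (hv : v ≠ α) : ‖invMap α v‖ = ‖v - α‖⁻¹ := by
  have h : v - α ≠ 0 := sub_ne_zero.2 hv
  have h2 : ‖v - α‖ ≠ 0 := norm_ne_zero_iff.2 h
  rw [invMap, norm_smul, norm_inv, norm_pow, norm_norm]
  field_simp

lemma invMap_ne_zero {α v : V} (hv : v ≠ α) : invMap α v ≠ 0 := by
  intro h
  have := norm_invMap hv
  rw [h, norm_zero] at this
  have h2 : ‖v - α‖ ≠ 0 := norm_ne_zero_iff.2 (sub_ne_zero.2 hv)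
  rw [eq_comm, inv_eq_zero] at this
  exact norm_ne_zero_iff.2 (sub_ne_zero.2 hv) this

lemma invBack_invMap {α v : V} (hv : v ≠ α) : invBack α (invMap α v) = v := by
  have h : v - α ≠ 0 := sub_ne_zero.2 hv
  have h2 : ‖v - α‖ ≠ 0 := norm_ne_zero_iff.2 h
  rw [invBack, norm_invMap hv, invMap, smul_smul]
  rw [inv_pow, inv_inv]
  rw [show ‖v - α‖ ^ 2 * (‖v - α‖ ^ 2)⁻¹ = 1 by field_simp]
  simp

lemma norm_invBack_sub {α q : V} (hq : q ≠ 0) : ‖invBack α q - α‖ = ‖q‖⁻¹ := by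
  have h2 : ‖q‖ ≠ 0 := norm_ne_zero_iff.2 hq
  rw [invBack, add_sub_cancel_left, norm_smul, norm_inv, norm_pow, norm_norm]
  field_simp

lemma invBack_ne {α q : V} (hq : q ≠ 0) : invBack α q ≠ α := by
  intro h
  have := norm_invBack_sub (α := α) hq
  rw [h, sub_self, norm_zero] at this
  exact norm_ne_zero_iff.2 hq (by simpa using this.symm)

lemma invMap_invBack {α q : V} (hq : q ≠ 0) : invMap α (invBack α q) = q := by
  have h2 : ‖q‖ ≠ 0 := norm_ne_zero_iff.2 hq
  rw [invMap, norm_invBack_sub hq, invBack, add_sub_cancel_left, smul_smul]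
  rw [inv_pow, inv_inv]
  rw [show ‖q‖ ^ 2 * (‖q‖ ^ 2)⁻¹ = 1 by field_simp]
  simp

lemma dist_invMap {α u v : V} (hu : u ≠ α) (hv : v ≠ α) :
    dist (invMap α u) (invMap α v) = dist u v / (‖u - α‖ * ‖v - α‖) := by
  have hu' : u - α ≠ 0 := sub_ne_zero.2 hu
  have hv' : v - α ≠ 0 := sub_ne_zero.2 hv
  have hnu : ‖u - α‖ ≠ 0 := norm_ne_zero_iff.2 hu'
  have hnv : ‖v - α‖ ≠ 0 := norm_ne_zero_iff.2 hv'
  have hsq : dist (invMap α u) (invMap α v) ^ 2 = (dist u v / (‖u - α‖ * ‖v - α‖)) ^ 2 := by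
    rw [dist_eq_norm, dist_eq_norm, invMap, invMap, norm_sub_sq_real,
      norm_smul, norm_smul, real_inner_smul_left, real_inner_smul_right]
    have hiuu : (inner ℝ (u - α) (u - α) : ℝ) = ‖u - α‖ ^ 2 := real_inner_self_eq_norm_sq _
    have hivv : (inner ℝ (v - α) (v - α) : ℝ) = ‖v - α‖ ^ 2 := real_inner_self_eq_norm_sq _
    have huv : ‖u - v‖ ^ 2 = ‖u - α‖ ^ 2 - 2 * (inner ℝ (u - α) (v - α) : ℝ) + ‖v - α‖ ^ 2 := by
      rw [show u - v = (u - α) - (v - α) by abel, norm_sub_sq_real]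
    rw [div_pow, mul_pow, huv]
    simp only [norm_inv, Real.norm_eq_abs, abs_norm, norm_pow]
    field_simp
    ring
  have h1 : 0 ≤ dist (invMap α u) (invMap α v) := dist_nonneg
  have h2 : 0 ≤ dist u v / (‖u - α‖ * ‖v - α‖) := by positivity
  nlinarith [hsq]

lemma continuousAt_invBack {α : V} {q : V} (hq : q ≠ 0) : ContinuousAt (invBack α) q := by
  have h2 : ‖q‖ ^ 2 ≠ 0 := pow_ne_zero 2 (norm_ne_zero_iff.2 hq)
  apply ContinuousAt.add continuousAt_const
  exact ContinuousAt.smul (((continuous_norm.pow 2).continuousAt).inv₀ h2) continuousAt_id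

end inv

section key

instance onePointT4 (n : ℕ) : T4Space (OnePoint (EuclideanSpace ℝ (Fin n))) := ⟨⟩

variable {n : ℕ}
local notation "V" => EuclideanSpace ℝ (Fin n)
local notation "X" => OnePoint (EuclideanSpace ℝ (Fin n))

lemma chordal_pos {x y : OnePoint (EuclideanSpace ℝ (Fin n))} (h : x ≠ y) : 0 < chordal x y := by
  induction x using OnePoint.rec <;> induction y using OnePoint.rec
  · exact absurd rfl h
  · rename_i b; rw [chordal_infty_coe]; positivity
  · rename_i a; rw [chordal_coe_infty]; positivity
  · rename_i a b
    rw [chordal_coe_coe]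
    have hab : a ≠ b := fun hh => h (by rw [hh])
    have hd : 0 < dist a b := dist_pos.2 hab
    positivity

lemma chordal_le_one (x y : OnePoint (EuclideanSpace ℝ (Fin n))) : chordal x y ≤ 1 := by
  have hS1 : ∀ v : V, (1:ℝ) ≤ Real.sqrt (1 + ‖v‖ ^ 2) := by
    intro v
    have := Real.sqrt_le_sqrt (show (1:ℝ) ≤ 1 + ‖v‖ ^ 2 by nlinarith [sq_nonneg ‖v‖])
    simpa using this
  induction x using OnePoint.rec <;> induction y using OnePoint.rec
  · norm_num [chordal_infty_infty]
  · rename_i b; rw [chordal_infty_coe, div_le_one (S_pos b)]; exact hS1 b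
  · rename_i a; rw [chordal_coe_infty, div_le_one (S_pos a)]; exact hS1 a
  · rename_i a b
    rw [chordal_coe_coe, div_le_one (by positivity)]
    have h1 : dist a b ≤ ‖a‖ + ‖b‖ := by rw [dist_eq_norm]; exact norm_sub_le a b
    refine h1.trans ?_
    have h2 : (‖a‖ + ‖b‖) = Real.sqrt ((‖a‖ + ‖b‖) ^ 2) := by rw [Real.sqrt_sq (by positivity)]
    rw [h2, ← Real.sqrt_mul (le_of_lt (sq_pos a))]
    apply Real.sqrt_le_sqrt
    nlinarith [norm_nonneg a, norm_nonneg b, sq_nonneg (‖a‖ * ‖b‖ - 1)]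

set_option maxHeartbeats 1600000 in
lemma key_frontier (E : Set (OnePoint (EuclideanSpace ℝ (Fin n)))) (hE : IsCompact E)
    (hne : E.Nonempty) (hfr : (frontier E).Nonempty)
    (a z : OnePoint (EuclideanSpace ℝ (Fin n))) (haE : a ∉ E)
    (x0 : OnePoint (EuclideanSpace ℝ (Fin n))) (hx0 : x0 ∈ E) :
    ∃ w ∈ frontier E, chordal z x0 / chordal a x0 ≤ chordal z w / chordal a w := by
  have hfrE : frontier E ⊆ E := hE.isClosed.frontier_subset
  have hane : ∀ w ∈ E, a ≠ w := fun w hw h => haE (h ▸ hw)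
  set f : X → ℝ := fun w => chordal z w / chordal a w with hf_def
  suffices hgood : ∃ w ∈ frontier E, f x0 ≤ f w by
    obtain ⟨w, h1, h2⟩ := hgood; exact ⟨w, h1, h2⟩
  have hf_nonneg : ∀ w, 0 ≤ f w :=
    fun w => div_nonneg (chordal_nonneg _ _) (chordal_nonneg _ _)
  by_cases hza : z = a
  · obtain ⟨w, hw⟩ := hfr
    refine ⟨w, hw, ?_⟩
    subst hza
    have h1 : f x0 = 1 := div_self (chordal_pos (hane x0 hx0)).ne'
    have h2 : f w = 1 := div_self (chordal_pos (hane w (hfrE hw))).ne'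
    rw [h1, h2]
  have c1 : Continuous fun w : X => chordal z w :=
    continuous_chordal.comp (continuous_const.prodMk continuous_id)
  have c2 : Continuous fun w : X => chordal a w :=
    continuous_chordal.comp (continuous_const.prodMk continuous_id)
  have hfc : ContinuousOn f E :=
    c1.continuousOn.div c2.continuousOn (fun w hw => (chordal_pos (hane w hw)).ne')
  obtain ⟨w0, hw0E, hmax⟩ := hE.exists_isMaxOn hne hfc
  by_cases hw0f : w0 ∈ frontier E
  · exact ⟨w0, hw0f, hmax hx0⟩
  have hw0i : w0 ∈ interior E := by
    by_contra h
    exact hw0f ⟨subset_closure hw0E, h⟩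
  suffices hkey : ∃ w ∈ frontier E, f w0 ≤ f w by
    obtain ⟨w, h1, h2⟩ := hkey
    exact ⟨w, h1, le_trans (hmax hx0) h2⟩
  obtain rfl | ⟨α, rfl⟩ : a = ∞ ∨ ∃ α : V, a = α := by
    induction a using OnePoint.rec
    · exact Or.inl rfl
    · exact Or.inr ⟨_, rfl⟩
  -- CASE a = ∞
  · obtain ⟨u, rfl⟩ : ∃ u : V, z = u := by
      induction z using OnePoint.rec
      · exact absurd rfl hza
      · exact ⟨_, rfl⟩
    obtain ⟨v0, rfl⟩ : ∃ v0 : V, w0 = v0 := by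
      induction w0 using OnePoint.rec
      · exact absurd hw0E haE
      · exact ⟨_, rfl⟩
    have hSu := S_pos u
    have hff : ∀ v : V, f (v : X) = dist u v / Real.sqrt (1 + ‖u‖ ^ 2) := by
      intro v
      have hSv := S_pos v
      simp only [hf_def, chordal_coe_coe, chordal_infty_coe]
      field_simp
    by_cases huv : u = v0
    · obtain ⟨w, hw⟩ := hfr
      refine ⟨w, hw, ?_⟩
      have h0 : f (v0 : X) = 0 := by
        rw [hff, ← huv, dist_self, zero_div]
      rw [h0]
      exact hf_nonneg w
    · exfalso
      have hU : IsOpen ((fun v : V => (v : X)) ⁻¹' interior E) :=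
        isOpen_interior.preimage OnePoint.continuous_coe
      have hv0U : v0 ∈ (fun v : V => (v : X)) ⁻¹' interior E := hw0i
      obtain ⟨ε, hε, hball⟩ := Metric.isOpen_iff.1 hU v0 hv0U
      have hd : (0:ℝ) < ‖v0 - u‖ := by
        rw [norm_pos_iff]
        exact sub_ne_zero.2 (fun h => huv h.symm)
      set t := ε / (2 * ‖v0 - u‖) with ht_def
      have ht : 0 < t := by positivity
      set v1 := v0 + t • (v0 - u) with hv1_def
      have hv1U : v1 ∈ (fun v : V => (v : X)) ⁻¹' interior E := by
        apply hball
        rw [Metric.mem_ball]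
        have heq : dist v1 v0 = t * ‖v0 - u‖ := by
          rw [dist_eq_norm, hv1_def, add_sub_cancel_left, norm_smul, Real.norm_eq_abs,
            abs_of_pos ht]
        have h9 : t * ‖v0 - u‖ = ε / 2 := by
          rw [ht_def]
          field_simp
        rw [heq, h9]
        linarith
      have hv1E : (v1 : X) ∈ E := interior_subset hv1U
      have hle : f (v1 : X) ≤ f (v0 : X) := hmax hv1E
      rw [hff, hff] at hle
      have h2 : dist u v1 ≤ dist u v0 := by
        have h3 := mul_le_mul_of_nonneg_right hle hSu.le
        rwa [div_mul_cancel₀ _ hSu.ne', div_mul_cancel₀ _ hSu.ne'] at h3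
      have h3 : dist u v1 = (1 + t) * ‖v0 - u‖ := by
        rw [dist_eq_norm, norm_sub_rev]
        rw [show v1 - u = (1 + t) • (v0 - u) by rw [hv1_def]; module]
        rw [norm_smul, Real.norm_eq_abs, abs_of_pos (by linarith)]
      have h4 : dist u v0 = ‖v0 - u‖ := by rw [dist_eq_norm, norm_sub_rev]
      nlinarith
  -- CASE a = coe α
  · have hαE : ∀ v : V, (v : X) ∈ E → v ≠ α := by
      intro v hv h
      exact haE (h ▸ hv)
    set Jm : X → V := fun w => Option.elim w 0 (invMap α) with hJm_def
    have hJm_infty : Jm ∞ = 0 := rfl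
    have hJm_coe : ∀ v : V, Jm (v : X) = invMap α v := fun v => rfl
    have hSα := S_pos α
    obtain ⟨C, hC, hfw⟩ : ∃ C : ℝ, 0 < C ∧ ∀ w ∈ E, f w = C * dist (Jm z) (Jm w) := by
      obtain rfl | ⟨u, rfl⟩ : z = ∞ ∨ ∃ u : V, z = u := by
        induction z using OnePoint.rec
        · exact Or.inl rfl
        · exact Or.inr ⟨_, rfl⟩
      · refine ⟨Real.sqrt (1 + ‖α‖ ^ 2), hSα, ?_⟩
        intro w hw
        obtain rfl | ⟨v, rfl⟩ : w = ∞ ∨ ∃ v : V, w = v := by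
          induction w using OnePoint.rec
          · exact Or.inl rfl
          · exact Or.inr ⟨_, rfl⟩
        · rw [hJm_infty, dist_self, mul_zero]
          simp [hf_def, chordal_infty_infty]
        · have hvα := hαE v hw
          rw [hJm_infty, hJm_coe]
          have h1 : dist (0 : V) (invMap α v) = ‖v - α‖⁻¹ := by
            rw [dist_comm, dist_zero_right, norm_invMap hvα]
          rw [h1]
          simp only [hf_def, chordal_infty_coe, chordal_coe_coe]
          have hdist : dist α v = ‖v - α‖ := by rw [dist_eq_norm, norm_sub_rev]
          rw [hdist]
          have hnv : (0:ℝ) < ‖v - α‖ := norm_pos_iff.2 (sub_ne_zero.2 hvα)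
          have hSv := S_pos v
          field_simp
      · have huα : u ≠ α := fun h => hza (by rw [h])
        have hnu : (0:ℝ) < ‖u - α‖ := norm_pos_iff.2 (sub_ne_zero.2 huα)
        have hSu := S_pos u
        refine ⟨Real.sqrt (1 + ‖α‖ ^ 2) * ‖u - α‖ / Real.sqrt (1 + ‖u‖ ^ 2), by positivity, ?_⟩
        intro w hw
        obtain rfl | ⟨v, rfl⟩ : w = ∞ ∨ ∃ v : V, w = v := by
          induction w using OnePoint.rec
          · exact Or.inl rfl
          · exact Or.inr ⟨_, rfl⟩
        · rw [hJm_infty, hJm_coe]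
          have h1 : dist (invMap α u) (0:V) = ‖u - α‖⁻¹ := by
            rw [dist_zero_right, norm_invMap huα]
          rw [h1]
          simp only [hf_def, chordal_coe_infty]
          field_simp
        · have hvα := hαE v hw
          rw [hJm_coe, hJm_coe, dist_invMap huα hvα]
          simp only [hf_def, chordal_coe_coe]
          have hdαv : dist α v = ‖v - α‖ := by rw [dist_eq_norm, norm_sub_rev]
          have hnv : (0:ℝ) < ‖v - α‖ := norm_pos_iff.2 (sub_ne_zero.2 hvα)
          have hSv := S_pos v
          rw [hdαv]
          field_simp
    set p := Jm z with hp_def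
    set q0 := Jm w0 with hq0_def
    have hmax' : ∀ w ∈ E, dist p (Jm w) ≤ dist p q0 := by
      intro w hw
      have h5 : f w ≤ f w0 := hmax hw
      rw [hfw w hw, hfw w0 hw0E] at h5
      exact le_of_mul_le_mul_left h5 hC
    by_cases hd0 : dist p q0 = 0
    · obtain ⟨w, hw⟩ := hfr
      refine ⟨w, hw, ?_⟩
      have h0 : f w0 = 0 := by rw [hfw w0 hw0E, hd0, mul_zero]
      rw [h0]
      exact hf_nonneg w
    · exfalso
      have hd0' : 0 < dist p q0 := lt_of_le_of_ne dist_nonneg (Ne.symm hd0)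
      obtain ⟨w1, hw1E, hgt⟩ : ∃ w1 ∈ E, dist p q0 < dist p (Jm w1) := by
        obtain rfl | ⟨v0, rfl⟩ : w0 = ∞ ∨ ∃ v : V, w0 = v := by
          induction w0 using OnePoint.rec
          · exact Or.inl rfl
          · exact Or.inr ⟨_, rfl⟩
        · -- w0 = ∞
          obtain ⟨hKc, hKcpt⟩ := (OnePoint.isOpen_iff_of_mem hw0i).1 isOpen_interior
          obtain ⟨R, hR⟩ := hKcpt.isBounded.subset_closedBall 0
          have hq00 : q0 = 0 := rfl
          have hp0 : p ≠ 0 := by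
            intro h
            rw [h, hq00, dist_self] at hd0'
            exact lt_irrefl _ hd0'
          have hnp : (0:ℝ) < ‖p‖ := norm_pos_iff.2 hp0
          set t := (max R 0 + ‖α‖ + 1)⁻¹ with ht_def
          have htpos : (0:ℝ) < max R 0 + ‖α‖ + 1 := by positivity
          have ht : 0 < t := by positivity
          set q1 := (-(t * ‖p‖⁻¹)) • p with hq1_def
          have hq1norm : ‖q1‖ = t := by
            rw [hq1_def, norm_smul, Real.norm_eq_abs, abs_neg, abs_of_pos (by positivity)]
            field_simp
          have hq1ne : q1 ≠ 0 := by
            intro h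
            rw [h, norm_zero] at hq1norm
            exact ht.ne hq1norm
          set v1 := invBack α q1 with hv1_def
          have hv1big : max R 0 + 1 ≤ ‖v1‖ := by
            have h1 : ‖v1 - α‖ = ‖q1‖⁻¹ := norm_invBack_sub hq1ne
            have h2 : ‖v1 - α‖ ≤ ‖v1‖ + ‖α‖ := norm_sub_le v1 α
            rw [h1, hq1norm, ht_def, inv_inv] at h2
            linarith
          have hv1K : v1 ∈ (fun v : V => (v : X)) ⁻¹' interior E := by
            by_contra h
            have h6 := hR h
            rw [Metric.mem_closedBall, dist_zero_right] at h6
            have : ‖v1‖ ≤ max R 0 := le_trans h6 (le_max_left _ _)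
            linarith
          refine ⟨(v1 : X), interior_subset hv1K, ?_⟩
          rw [hJm_coe, hv1_def, invMap_invBack hq1ne]
          have hQ : dist p q1 = ‖p‖ + t := by
            rw [dist_eq_norm, hq1_def]
            rw [show p - (-(t * ‖p‖⁻¹)) • p = (1 + t * ‖p‖⁻¹) • p by module]
            rw [norm_smul, Real.norm_eq_abs, abs_of_pos (by positivity)]
            field_simp
          have hPQ : dist p q0 = ‖p‖ := by rw [hq00, dist_zero_right]
          rw [hPQ, hQ]
          linarith
        · -- w0 = coe v0
          have hv0α := hαE v0 hw0E
          have hq0v : q0 = invMap α v0 := rfl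
          have hq0ne : q0 ≠ 0 := by rw [hq0v]; exact invMap_ne_zero hv0α
          have hU : IsOpen ((fun v : V => (v : X)) ⁻¹' interior E) :=
            isOpen_interior.preimage OnePoint.continuous_coe
          have hv0U : v0 ∈ (fun v : V => (v : X)) ⁻¹' interior E := hw0i
          have hback : invBack α q0 = v0 := by rw [hq0v, invBack_invMap hv0α]
          have hnbhd : invBack α ⁻¹' ((fun v : V => (v : X)) ⁻¹' interior E) ∈ 𝓝 q0 :=
            (continuousAt_invBack hq0ne).preimage_mem_nhds
              (hU.mem_nhds (by rw [hback]; exact hv0U))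
          obtain ⟨ε, hε, hball⟩ := Metric.mem_nhds_iff.1 hnbhd
          have hq0pos : (0:ℝ) < ‖q0‖ := norm_pos_iff.2 hq0ne
          set t := min (ε / (2 * dist p q0)) (‖q0‖ / (2 * dist p q0)) with ht_def
          have ht : 0 < t := lt_min (by positivity) (by positivity)
          set q1 := q0 + t • (q0 - p) with hq1_def
          have hdist10 : dist q1 q0 = t * dist p q0 := by
            rw [dist_eq_norm, hq1_def, add_sub_cancel_left, norm_smul, Real.norm_eq_abs,
              abs_of_pos ht]
            congr 1
            rw [← dist_eq_norm, dist_comm]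
          have hq1ne : q1 ≠ 0 := by
            intro h
            have h7 : dist q1 q0 = ‖q0‖ := by rw [h, dist_comm, dist_zero_right]
            rw [hdist10] at h7
            have h8 : t * dist p q0 ≤ ‖q0‖ / 2 := by
              calc t * dist p q0 ≤ (‖q0‖ / (2 * dist p q0)) * dist p q0 :=
                    mul_le_mul_of_nonneg_right (min_le_right _ _) dist_nonneg
                _ = ‖q0‖ / 2 := by field_simp
            linarith
          have hq1ball : q1 ∈ Metric.ball q0 ε := by
            rw [Metric.mem_ball, hdist10]
            calc t * dist p q0 ≤ (ε / (2 * dist p q0)) * dist p q0 :=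
                  mul_le_mul_of_nonneg_right (min_le_left _ _) dist_nonneg
              _ = ε / 2 := by field_simp
              _ < ε := by linarith
          have hq1mem := hball hq1ball
          refine ⟨((invBack α q1 : V) : X), interior_subset hq1mem, ?_⟩
          rw [hJm_coe, invMap_invBack hq1ne]
          have hPQ : dist p q1 = (1 + t) * dist p q0 := by
            rw [dist_eq_norm, hq1_def]
            rw [show p - (q0 + t • (q0 - p)) = (1 + t) • (p - q0) by module]
            rw [norm_smul, Real.norm_eq_abs, abs_of_pos (by linarith), ← dist_eq_norm]
          rw [hPQ]
          nlinarith
      exact absurd (hmax' w1 hw1E) (not_le.2 hgt)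

end key

/-- The cross-ratio `|a,x,b,y|` on `ℝ̂ⁿ`, defined via the chordal metric. -/
noncomputable def qCross {n : ℕ} (a x b y : OnePoint (EuclideanSpace ℝ (Fin n))) : ℝ :=
  chordal a b * chordal x y / (chordal a x * chordal b y)

/-- The Möbius metric `δ_G` for `G ⊆ ℝ̂ⁿ`. -/
noncomputable def deltaHat {n : ℕ} (G : Set (OnePoint (EuclideanSpace ℝ (Fin n))))
    (x y : OnePoint (EuclideanSpace ℝ (Fin n))) : ℝ :=
  sSup ((fun p : OnePoint (EuclideanSpace ℝ (Fin n)) × OnePoint (EuclideanSpace ℝ (Fin n)) =>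
    Real.log (1 + qCross p.1 x p.2 y)) '' (frontier G ×ˢ frontier G))

/-- The `δ_G`-diameter of a set `E ⊆ G`: `δ_G(E) = sup_{x,y ∈ E} δ_G(x,y)`. -/
noncomputable def deltaDiam {n : ℕ} (G E : Set (OnePoint (EuclideanSpace ℝ (Fin n)))) : ℝ :=
  sSup ((fun p : OnePoint (EuclideanSpace ℝ (Fin n)) × OnePoint (EuclideanSpace ℝ (Fin n)) =>
    deltaHat G p.1 p.2) '' (E ×ˢ E))

/-- For a compact set `E` in a domain `G ⊆ ℝ̂ⁿ` whose complement has at least two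
points, the `δ_G`-diameter of `E` equals the `δ_G`-diameter of `∂E`. -/
theorem stmt15 (n : ℕ) (G E : Set (OnePoint (EuclideanSpace ℝ (Fin n))))
    (hG : IsOpen G) (hconn : IsConnected G) (hcard : Set.Nontrivial Gᶜ)
    (hE : IsCompact E) (hEG : E ⊆ G) :
    deltaDiam G E = deltaDiam G (frontier E) := by
  classical
  rcases eq_empty_or_nonempty E with rfl | hne
  · rw [frontier_empty]
  rcases Nat.eq_zero_or_pos n with rfl | hn
  · exfalso
    obtain ⟨e, he⟩ := hne
    obtain ⟨x, hx, y, hy, hxy⟩ := hcard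
    have hall : ∀ p : OnePoint (EuclideanSpace ℝ (Fin 0)),
        p = ∞ ∨ p = ((0 : EuclideanSpace ℝ (Fin 0)) : OnePoint (EuclideanSpace ℝ (Fin 0))) := by
      intro p
      induction p using OnePoint.rec
      · exact Or.inl rfl
      · rename_i v
        right
        congr 1
        exact Subsingleton.elim v 0
    rcases hall x with hx' | hx' <;> rcases hall y with hy' | hy' <;>
      rcases hall e with he' | he' <;>
      first
        | exact hxy (hx'.trans hy'.symm)
        | exact hx (by rw [hx', ← he']; exact hEG he)
        | exact hy (by rw [hy', ← he']; exact hEG he)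
  haveI : Nonempty (Fin n) := ⟨⟨0, hn⟩⟩
  haveI : Nontrivial (EuclideanSpace ℝ (Fin n)) := inferInstance
  have hEuniv : E ≠ univ := by
    obtain ⟨x, hx, -⟩ := hcard
    intro h
    exact hx (hEG (by rw [h]; exact mem_univ x))
  have hfr : (frontier E).Nonempty := by
    rw [nonempty_iff_ne_empty]
    intro h
    have hclopen : IsClopen E := by
      constructor
      · exact hE.isClosed
      · have h2 : interior E = E := by
          apply Subset.antisymm interior_subset
          intro x hx
          by_contra hxi
          exact absurd (show x ∈ frontier E from ⟨subset_closure hx, hxi⟩) (by rw [h]; exact id)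
        rw [← h2]; exact isOpen_interior
    rcases isClopen_iff.1 hclopen with h1 | h1
    · exact hne.ne_empty h1
    · exact hEuniv h1
  have hfrE : frontier E ⊆ E := hE.isClosed.frontier_subset
  by_cases hFG : frontier G = ∅
  · have hdh : ∀ x y : OnePoint (EuclideanSpace ℝ (Fin n)), deltaHat G x y = 0 := by
      intro x y
      unfold deltaHat
      rw [hFG]
      simp [Real.sSup_empty]
    have himg : ∀ S : Set (OnePoint (EuclideanSpace ℝ (Fin n)) × OnePoint (EuclideanSpace ℝ (Fin n))),
        S.Nonempty → sSup ((fun p : OnePoint (EuclideanSpace ℝ (Fin n)) ×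
          OnePoint (EuclideanSpace ℝ (Fin n)) => deltaHat G p.1 p.2) '' S) = 0 := by
      intro S hS
      have himg2 : (fun p : OnePoint (EuclideanSpace ℝ (Fin n)) ×
          OnePoint (EuclideanSpace ℝ (Fin n)) => deltaHat G p.1 p.2) '' S = {0} := by
        apply Subset.antisymm
        · rintro r ⟨pq, hpq, rfl⟩
          simp [hdh]
        · intro r hr
          rw [mem_singleton_iff] at hr
          subst hr
          obtain ⟨p, hp⟩ := hS
          exact ⟨p, hp, hdh _ _⟩
      rw [himg2, csSup_singleton]
    unfold deltaDiam
    rw [himg _ (hne.prod hne), himg _ (hfr.prod hfr)]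
  have hFGne : (frontier G).Nonempty := nonempty_iff_ne_empty.2 hFG
  have hAcpt : IsCompact (frontier G) := isClosed_frontier.isCompact
  have hGfr : ∀ a ∈ frontier G, a ∉ G := by
    intro a ha hag
    rw [hG.frontier_eq] at ha
    exact ha.2 hag
  have hAE : ∀ a ∈ frontier G, ∀ x ∈ E, a ≠ x := fun a ha x hx h => hGfr a ha (h ▸ hEG hx)
  obtain ⟨⟨a0, x0⟩, hmem0, hmin⟩ := (hAcpt.prod hE).exists_isMinOn (hFGne.prod hne)
    continuous_chordal.continuousOn
  set m := chordal a0 x0 with hm_def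
  have hm : 0 < m := chordal_pos (hAE a0 hmem0.1 x0 hmem0.2)
  have hlow : ∀ a ∈ frontier G, ∀ x ∈ E, m ≤ chordal a x := by
    intro a ha x hx
    exact hmin (Set.mk_mem_prod ha hx)
  set M := 1 / (m * m) with hM_def
  have hM : 0 < M := by positivity
  have hqnn : ∀ a x b y : OnePoint (EuclideanSpace ℝ (Fin n)), 0 ≤ qCross a x b y :=
    fun a x b y => div_nonneg (mul_nonneg (chordal_nonneg _ _) (chordal_nonneg _ _))
      (mul_nonneg (chordal_nonneg _ _) (chordal_nonneg _ _))
  have hqB : ∀ a ∈ frontier G, ∀ b ∈ frontier G, ∀ x ∈ E, ∀ y ∈ E, qCross a x b y ≤ M := by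
    intro a ha b hb x hx y hy
    show chordal a b * chordal x y / (chordal a x * chordal b y) ≤ 1 / (m * m)
    apply div_le_div₀ (by norm_num) ?_ (by positivity) ?_
    · nlinarith [chordal_le_one a b, chordal_le_one x y, chordal_nonneg a b, chordal_nonneg x y]
    · exact mul_le_mul (hlow a ha x hx) (hlow b hb y hy) hm.le (chordal_nonneg a x)
  have hlogB : ∀ a ∈ frontier G, ∀ b ∈ frontier G, ∀ x ∈ E, ∀ y ∈ E,
      Real.log (1 + qCross a x b y) ≤ Real.log (1 + M) := by
    intro a ha b hb x hx y hy
    have h1 := hqnn a x b y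
    exact Real.log_le_log (by linarith) (by linarith [hqB a ha b hb x hx y hy])
  have hHatB : ∀ x ∈ E, ∀ y ∈ E, deltaHat G x y ≤ Real.log (1 + M) := by
    intro x hx y hy
    apply Real.sSup_le
    · rintro r ⟨⟨a, b⟩, ⟨ha, hb⟩, rfl⟩
      exact hlogB a ha b hb x hx y hy
    · exact Real.log_nonneg (by linarith)
  have hHatnn : ∀ x y : OnePoint (EuclideanSpace ℝ (Fin n)), 0 ≤ deltaHat G x y := by
    intro x y
    apply Real.sSup_nonneg
    rintro r ⟨⟨a, b⟩, -, rfl⟩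
    exact Real.log_nonneg (by linarith [hqnn a x b y])
  have hD2nn : 0 ≤ deltaDiam G (frontier E) := by
    apply Real.sSup_nonneg
    rintro r ⟨⟨x, y⟩, -, rfl⟩
    exact hHatnn x y
  have hdom : ∀ x ∈ E, ∀ y ∈ E, ∀ a ∈ frontier G, ∀ b ∈ frontier G,
      Real.log (1 + qCross a x b y) ≤ deltaDiam G (frontier E) := by
    intro x hx y hy a ha b hb
    have haE : a ∉ E := fun h => hGfr a ha (hEG h)
    have hbE : b ∉ E := fun h => hGfr b hb (hEG h)
    obtain ⟨x', hx'f, hx'⟩ := key_frontier E hE hne hfr a y haE x hx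
    obtain ⟨y', hy'f, hy'⟩ := key_frontier E hE hne hfr b x' hbE y hy
    have hx'E := hfrE hx'f
    have hy'E := hfrE hy'f
    have q1 : qCross a x b y ≤ qCross a x' b y := by
      have e1 : ∀ u : OnePoint (EuclideanSpace ℝ (Fin n)),
          qCross a u b y = (chordal a b / chordal b y) * (chordal y u / chordal a u) := by
        intro u
        show chordal a b * chordal u y / (chordal a u * chordal b y) = _
        rw [chordal_comm u y, mul_comm (chordal a u) (chordal b y), mul_div_mul_comm]
      rw [e1 x, e1 x']
      exact mul_le_mul_of_nonneg_left hx' (div_nonneg (chordal_nonneg _ _) (chordal_nonneg _ _))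
    have q2 : qCross a x' b y ≤ qCross a x' b y' := by
      have e2 : ∀ u : OnePoint (EuclideanSpace ℝ (Fin n)),
          qCross a x' b u = (chordal a b / chordal a x') * (chordal x' u / chordal b u) := by
        intro u
        show chordal a b * chordal x' u / (chordal a x' * chordal b u) = _
        rw [mul_div_mul_comm]
      rw [e2 y, e2 y']
      exact mul_le_mul_of_nonneg_left hy' (div_nonneg (chordal_nonneg _ _) (chordal_nonneg _ _))
    have h3 : Real.log (1 + qCross a x b y) ≤ Real.log (1 + qCross a x' b y') :=
      Real.log_le_log (by linarith [hqnn a x b y]) (by linarith)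
    refine h3.trans ?_
    have h4 : Real.log (1 + qCross a x' b y') ≤ deltaHat G x' y' := by
      apply le_csSup
      · refine ⟨Real.log (1 + M), ?_⟩
        rintro r ⟨⟨a', b'⟩, ⟨ha', hb'⟩, rfl⟩
        exact hlogB a' ha' b' hb' x' hx'E y' hy'E
      · exact ⟨(a, b), ⟨ha, hb⟩, rfl⟩
    refine h4.trans ?_
    apply le_csSup
    · refine ⟨Real.log (1 + M), ?_⟩
      rintro r ⟨⟨u, w⟩, ⟨hu, hw⟩, rfl⟩
      exact hHatB u (hfrE hu) w (hfrE hw)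
    · exact ⟨(x', y'), ⟨hx'f, hy'f⟩, rfl⟩
  apply le_antisymm
  · apply Real.sSup_le
    · rintro r ⟨⟨x, y⟩, ⟨hx, hy⟩, rfl⟩
      apply Real.sSup_le
      · rintro r' ⟨⟨a, b⟩, ⟨ha, hb⟩, rfl⟩
        exact hdom x hx y hy a ha b hb
      · exact hD2nn
    · exact hD2nn
  · apply csSup_le_csSup
    · refine ⟨Real.log (1 + M), ?_⟩
      rintro r ⟨⟨x, y⟩, ⟨hx, hy⟩, rfl⟩
      exact hHatB x hx y hy
    · exact (hfr.prod hfr).image _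
    · exact image_mono (prod_mono hfrE hfrE)
end

section
/- For the sets $E=[-1,0]$ and $F=[s,\infty]$ (with $s>0$, including $\infty$) viewed as subsets of $\overline{\mathbb{R}}^n$ lying on the real axis, the quantity $\delta(E,F)=\delta_{\overline{\mathbb{R}}^n\setminus F}(E)$ equals $\log(1+1/s)$. -/
open Real Set OnePoint

/-! ### Auxiliary material -/

namespace Stmt17Aux

variable {n : ℕ}

/-- embedding of the real line in `ℝ̂ⁿ` -/
noncomputable def emb (i : Fin n) (t : ℝ) : OnePoint (EuclideanSpace ℝ (Fin n)) :=
  ((EuclideanSpace.single i t : EuclideanSpace ℝ (Fin n)) :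
    OnePoint (EuclideanSpace ℝ (Fin n)))

lemma single_isometry (i : Fin n) :
    Isometry (fun t : ℝ => (EuclideanSpace.single i t : EuclideanSpace ℝ (Fin n))) :=
  Isometry.of_dist_eq fun a b => EuclideanSpace.dist_single_same i a b

lemma chordal_nonneg (x y : OnePoint (EuclideanSpace ℝ (Fin n))) : 0 ≤ chordal x y := by
  cases x <;> cases y <;> simp only [chordal, Option.elim] <;> positivity

lemma qCross_nonneg (a x b y : OnePoint (EuclideanSpace ℝ (Fin n))) : 0 ≤ qCross a x b y :=
  div_nonneg (mul_nonneg (chordal_nonneg _ _) (chordal_nonneg _ _))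
    (mul_nonneg (chordal_nonneg _ _) (chordal_nonneg _ _))

lemma sqrt_ne (t : ℝ) : Real.sqrt (1 + t ^ 2) ≠ 0 := by positivity

lemma chordal_emb_emb (i : Fin n) (α β : ℝ) :
    chordal (emb i α) (emb i β) = |α - β| / (Real.sqrt (1 + α ^ 2) * Real.sqrt (1 + β ^ 2)) := by
  show dist (EuclideanSpace.single i α) (EuclideanSpace.single i β) / _ = _
  rw [EuclideanSpace.dist_single_same, Real.dist_eq]
  simp [EuclideanSpace.norm_single, sq_abs]

lemma chordal_emb_infty (i : Fin n) (α : ℝ) :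
    chordal (emb i α) ∞ = 1 / Real.sqrt (1 + α ^ 2) := by
  show 1 / Real.sqrt (1 + ‖EuclideanSpace.single i α‖ ^ 2) = _
  simp [EuclideanSpace.norm_single, sq_abs]

lemma chordal_infty_emb (i : Fin n) (α : ℝ) :
    chordal ∞ (emb i α) = 1 / Real.sqrt (1 + α ^ 2) := by
  show 1 / Real.sqrt (1 + ‖EuclideanSpace.single i α‖ ^ 2) = _
  simp [EuclideanSpace.norm_single, sq_abs]

lemma chordal_infty_infty : chordal (∞ : OnePoint (EuclideanSpace ℝ (Fin n))) ∞ = 0 := rfl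

lemma aux_ratio (A B C D p q x y : ℝ) (hp : p ≠ 0) (hq : q ≠ 0) (hx : x ≠ 0) (hy : y ≠ 0) :
    A / (p * q) * (B / (x * y)) / (C / (p * x) * (D / (q * y))) = A * B / (C * D) := by
  rcases eq_or_ne C 0 with hC | hC
  · simp [hC]
  rcases eq_or_ne D 0 with hD | hD
  · simp [hD]
  field_simp

lemma aux_ratio_inftyA (B D q x y : ℝ) (hq : q ≠ 0) (hx : x ≠ 0) (hy : y ≠ 0) :
    1 / q * (B / (x * y)) / (1 / x * (D / (q * y))) = B / D := by
  rcases eq_or_ne D 0 with hD | hD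
  · simp [hD]
  field_simp

lemma aux_ratio_inftyB (B C p x y : ℝ) (hp : p ≠ 0) (hx : x ≠ 0) (hy : y ≠ 0) :
    1 / p * (B / (x * y)) / (C / (p * x) * (1 / y)) = B / C := by
  rcases eq_or_ne C 0 with hC | hC
  · simp [hC]
  field_simp

lemma qCross_emb_emb (i : Fin n) (α ξ β η : ℝ) :
    qCross (emb i α) (emb i ξ) (emb i β) (emb i η)
      = |α - β| * |ξ - η| / (|α - ξ| * |β - η|) := by
  rw [qCross, chordal_emb_emb, chordal_emb_emb, chordal_emb_emb, chordal_emb_emb]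
  exact aux_ratio _ _ _ _ _ _ _ _ (sqrt_ne α) (sqrt_ne β) (sqrt_ne ξ) (sqrt_ne η)

lemma qCross_infty_emb (i : Fin n) (ξ β η : ℝ) :
    qCross ∞ (emb i ξ) (emb i β) (emb i η) = |ξ - η| / |β - η| := by
  rw [qCross, chordal_infty_emb, chordal_emb_emb, chordal_infty_emb, chordal_emb_emb]
  exact aux_ratio_inftyA _ _ _ _ _ (sqrt_ne β) (sqrt_ne ξ) (sqrt_ne η)

lemma qCross_emb_infty (i : Fin n) (α ξ η : ℝ) :
    qCross (emb i α) (emb i ξ) ∞ (emb i η) = |ξ - η| / |α - ξ| := by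
  rw [qCross, chordal_emb_infty, chordal_emb_emb, chordal_emb_emb, chordal_infty_emb]
  exact aux_ratio_inftyB _ _ _ _ _ (sqrt_ne α) (sqrt_ne ξ) (sqrt_ne η)

lemma qCross_infty_infty (x y : OnePoint (EuclideanSpace ℝ (Fin n))) :
    qCross ∞ x ∞ y = 0 := by
  rw [qCross, chordal_infty_infty]
  simp

/-- The set `F = [s, ∞]` on the real axis of `ℝ̂ⁿ`. -/
noncomputable def Fset (i : Fin n) (s : ℝ) : Set (OnePoint (EuclideanSpace ℝ (Fin n))) :=
  (fun t : ℝ =>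
      ((EuclideanSpace.single i t : EuclideanSpace ℝ (Fin n)) :
        OnePoint (EuclideanSpace ℝ (Fin n)))) '' Set.Ici s ∪ {∞}

lemma emb_mem_Fset {i : Fin n} {s t : ℝ} (h : s ≤ t) : emb i t ∈ Fset i s :=
  Or.inl ⟨t, h, rfl⟩

lemma infty_mem_Fset {i : Fin n} {s : ℝ} : (∞ : OnePoint (EuclideanSpace ℝ (Fin n))) ∈ Fset i s :=
  Or.inr rfl

lemma Fset_closed (i : Fin n) (s : ℝ) : IsClosed (Fset i s) := by
  rw [← isOpen_compl_iff]
  have hinf : (∞ : OnePoint (EuclideanSpace ℝ (Fin n))) ∉ (Fset i s)ᶜ := by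
    simp [Fset]
  rw [OnePoint.isOpen_iff_of_notMem hinf]
  have hcl : IsClosed ((fun t : ℝ => (EuclideanSpace.single i t : EuclideanSpace ℝ (Fin n)))
      '' Set.Ici s) :=
    (single_isometry i).isClosedEmbedding.isClosedMap _ isClosed_Ici
  convert hcl.isOpen_compl using 1
  ext v
  simp [Fset, OnePoint.coe_eq_coe, eq_comm]

lemma tendsto_emb (i : Fin n) {u : ℕ → ℝ} {t : ℝ} (h : Filter.Tendsto u Filter.atTop (nhds t)) :
    Filter.Tendsto (fun k => emb i (u k)) Filter.atTop (nhds (emb i t)) := by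
  have hc : Continuous (fun r : ℝ => emb i r) :=
    OnePoint.continuous_coe.comp (single_isometry i).continuous
  exact (hc.tendsto t).comp h

lemma frontier_emb_s {i : Fin n} {s : ℝ} : emb i s ∈ frontier (Fset i s) := by
  rw [frontier_eq_closure_inter_closure]
  refine ⟨subset_closure (emb_mem_Fset le_rfl), ?_⟩
  have hlim : Filter.Tendsto (fun k : ℕ => emb i (s - 1 / (k + 1))) Filter.atTop
      (nhds (emb i s)) := by
    apply tendsto_emb
    have := tendsto_one_div_add_atTop_nhds_zero_nat (𝕜 := ℝ)
    have h2 := Filter.Tendsto.sub (tendsto_const_nhds (x := s) (f := Filter.atTop)) this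
    simpa using h2
  refine mem_closure_of_tendsto hlim (Filter.Eventually.of_forall fun k => ?_)
  intro hmem
  rcases hmem with ⟨t, ht, heq⟩ | heq
  · have heq2 : (EuclideanSpace.single i t : EuclideanSpace ℝ (Fin n))
        = EuclideanSpace.single i (s - 1 / (k + 1)) := OnePoint.coe_eq_coe.mp heq
    have := (single_isometry i).injective heq2
    have hk : (0 : ℝ) < 1 / (k + 1) := by positivity
    rw [this] at ht
    simp only [Set.mem_Ici] at ht
    linarith
  · exact OnePoint.coe_ne_infty _ heq

lemma frontier_infty {i : Fin n} {s : ℝ} (hs : 0 < s) :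
    (∞ : OnePoint (EuclideanSpace ℝ (Fin n))) ∈ frontier (Fset i s) := by
  rw [frontier_eq_closure_inter_closure]
  refine ⟨subset_closure infty_mem_Fset, ?_⟩
  have hlim : Filter.Tendsto (fun k : ℕ => emb i (-(k + 1) : ℝ)) Filter.atTop
      (nhds (∞ : OnePoint (EuclideanSpace ℝ (Fin n)))) := by
    apply OnePoint.tendsto_coe_infty.comp
    rw [Filter.coclosedCompact_eq_cocompact, ← Metric.cobounded_eq_cocompact,
      ← tendsto_norm_atTop_iff_cobounded]
    have : Filter.Tendsto (fun k : ℕ => (k : ℝ) + 1) Filter.atTop Filter.atTop :=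
      Filter.tendsto_atTop_add_const_right _ 1 tendsto_natCast_atTop_atTop
    refine this.congr fun k => ?_
    rw [EuclideanSpace.norm_single, Real.norm_eq_abs,
      abs_of_nonpos (by have := Nat.cast_nonneg (α := ℝ) k; linarith : (-(k + 1) : ℝ) ≤ 0)]
    ring
  refine mem_closure_of_tendsto hlim (Filter.Eventually.of_forall fun k => ?_)
  intro hmem
  rcases hmem with ⟨t, ht, heq⟩ | heq
  · have heq2 : (EuclideanSpace.single i t : EuclideanSpace ℝ (Fin n))
        = EuclideanSpace.single i (-(k + 1) : ℝ) := OnePoint.coe_eq_coe.mp heq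
    have := (single_isometry i).injective heq2
    rw [this] at ht
    simp only [Set.mem_Ici] at ht
    have : (0 : ℝ) ≤ (k : ℝ) := Nat.cast_nonneg k
    linarith
  · exact OnePoint.coe_ne_infty _ heq

lemma ratio_bound_main {s α β ξ η : ℝ} (hs : 0 < s) (hα : s ≤ α) (hβ : s ≤ β)
    (hξ : ξ ∈ Set.Icc (-1 : ℝ) 0) (hη : η ∈ Set.Icc (-1 : ℝ) 0) :
    |α - β| * |ξ - η| / (|α - ξ| * |β - η|) ≤ 1 / s := by
  obtain ⟨hξ1, hξ2⟩ := hξ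
  obtain ⟨hη1, hη2⟩ := hη
  have h1 : |α - ξ| = α - ξ := abs_of_pos (by linarith)
  have h2 : |β - η| = β - η := abs_of_pos (by linarith)
  have h3 : |ξ - η| ≤ 1 := abs_le.mpr ⟨by linarith, by linarith⟩
  have h3' : 0 ≤ |ξ - η| := abs_nonneg _
  rw [h1, h2, div_le_div_iff₀ (by nlinarith) hs]
  rcases le_total β α with hba | hab
  · rw [abs_of_nonneg (by linarith : (0:ℝ) ≤ α - β)]
    have e1 := mul_le_mul_of_nonneg_right
      (mul_le_of_le_one_right (by linarith : (0:ℝ) ≤ α - β) h3) hs.le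
    have e2 : (α - β) * s ≤ (α - ξ) * (β - η) :=
      mul_le_mul (by linarith) (by linarith) hs.le (by linarith)
    nlinarith [e1, e2]
  · rw [abs_of_nonpos (by linarith : α - β ≤ 0)]
    have e1 := mul_le_mul_of_nonneg_right
      (mul_le_of_le_one_right (by linarith : (0:ℝ) ≤ β - α) h3) hs.le
    have e2 : (β - α) * s ≤ (β - η) * (α - ξ) :=
      mul_le_mul (by linarith) (by linarith) hs.le (by linarith)
    nlinarith [e1, e2]

lemma ratio_bound_half {s β ξ η : ℝ} (hs : 0 < s) (hβ : s ≤ β)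
    (hξ : ξ ∈ Set.Icc (-1 : ℝ) 0) (hη : η ∈ Set.Icc (-1 : ℝ) 0) :
    |ξ - η| / |β - η| ≤ 1 / s := by
  obtain ⟨hξ1, hξ2⟩ := hξ
  obtain ⟨hη1, hη2⟩ := hη
  have h2 : |β - η| = β - η := abs_of_pos (by linarith)
  have h3 : |ξ - η| ≤ 1 := abs_le.mpr ⟨by linarith, by linarith⟩
  have h3' : 0 ≤ |ξ - η| := abs_nonneg _
  rw [h2, div_le_div_iff₀ (by linarith) hs]
  nlinarith [mul_le_mul_of_nonneg_right h3 hs.le]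

lemma qCross_bound {i : Fin n} {s : ℝ} (hs : 0 < s) {a b : OnePoint (EuclideanSpace ℝ (Fin n))}
    (ha : a ∈ Fset i s) (hb : b ∈ Fset i s) {ξ η : ℝ}
    (hξ : ξ ∈ Set.Icc (-1 : ℝ) 0) (hη : η ∈ Set.Icc (-1 : ℝ) 0) :
    qCross a (emb i ξ) b (emb i η) ≤ 1 / s := by
  rcases ha with ⟨α, hα, rfl⟩ | ha
  · rcases hb with ⟨β, hβ, rfl⟩ | hb
    · show qCross (emb i α) (emb i ξ) (emb i β) (emb i η) ≤ 1 / s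
      rw [qCross_emb_emb]
      exact ratio_bound_main hs hα hβ hξ hη
    · rw [Set.mem_singleton_iff] at hb
      subst hb
      show qCross (emb i α) (emb i ξ) ∞ (emb i η) ≤ 1 / s
      rw [qCross_emb_infty]
      have := ratio_bound_half hs hα hη hξ
      rwa [abs_sub_comm η ξ] at this
  · rw [Set.mem_singleton_iff] at ha
    subst ha
    rcases hb with ⟨β, hβ, rfl⟩ | hb
    · show qCross ∞ (emb i ξ) (emb i β) (emb i η) ≤ 1 / s
      rw [qCross_infty_emb]
      exact ratio_bound_half hs hβ hξ hη
    · rw [Set.mem_singleton_iff] at hb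
      subst hb
      rw [qCross_infty_infty]
      positivity

lemma qCross_exact {i : Fin n} {s : ℝ} (hs : 0 < s) :
    qCross (emb i s) (emb i 0) ∞ (emb i (-1)) = 1 / s := by
  rw [qCross_emb_infty]
  rw [show (0 : ℝ) - (-1) = 1 by ring, show s - 0 = s by ring, abs_one, abs_of_pos hs]

end Stmt17Aux

open Stmt17Aux

set_option maxHeartbeats 1000000 in
/-- For `E = [-1,0]` and `F = [s,∞]` (with `s > 0`) on the real axis of `ℝ̂ⁿ`,
`δ(E,F) = δ_{ℝ̂ⁿ∖F}(E) = log(1 + 1/s)`. -/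
theorem stmt17 (n : ℕ) (hn : 0 < n) (s : ℝ) (hs : 0 < s) :
    deltaDiam
      (((fun t : ℝ =>
          ((EuclideanSpace.single (⟨0, hn⟩ : Fin n) t : EuclideanSpace ℝ (Fin n)) :
            OnePoint (EuclideanSpace ℝ (Fin n)))) '' Set.Ici s ∪ {∞})ᶜ)
      ((fun t : ℝ =>
          ((EuclideanSpace.single (⟨0, hn⟩ : Fin n) t : EuclideanSpace ℝ (Fin n)) :
            OnePoint (EuclideanSpace ℝ (Fin n)))) '' Set.Icc (-1) 0)
      = Real.log (1 + 1 / s) := by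
  set i : Fin n := ⟨0, hn⟩
  set X := OnePoint (EuclideanSpace ℝ (Fin n))
  set L := Real.log (1 + 1 / s) with hLdef
  have hL0 : 0 ≤ L := Real.log_nonneg (le_add_of_nonneg_right (by positivity))
  set G : Set X := (Fset i s)ᶜ with hGdef
  set E : Set X := (fun t : ℝ => emb i t) '' Set.Icc (-1) 0 with hEdef
  show deltaDiam G E = L
  have hfr : frontier G = frontier (Fset i s) := frontier_compl _
  have hsub : frontier G ⊆ Fset i s := hfr ▸ (Fset_closed i s).frontier_subset
  -- pointwise bound on log terms
  have hlog : ∀ a ∈ frontier G, ∀ b ∈ frontier G, ∀ ξ ∈ Set.Icc (-1 : ℝ) 0,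
      ∀ η ∈ Set.Icc (-1 : ℝ) 0,
      Real.log (1 + qCross a (emb i ξ) b (emb i η)) ≤ L := by
    intro a ha b hb ξ hξ η hη
    have h1 := qCross_bound hs (hsub ha) (hsub hb) hξ hη
    have h2 := qCross_nonneg a (emb i ξ) b (emb i η)
    exact Real.log_le_log (by linarith) (by linarith)
  -- deltaHat bound
  have hHat : ∀ ξ ∈ Set.Icc (-1 : ℝ) 0, ∀ η ∈ Set.Icc (-1 : ℝ) 0,
      deltaHat G (emb i ξ) (emb i η) ≤ L := by
    intro ξ hξ η hη
    apply Real.sSup_le _ hL0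
    rintro w ⟨⟨a, b⟩, ⟨ha, hb⟩, rfl⟩
    exact hlog a ha b hb ξ hξ η hη
  have hup : deltaDiam G E ≤ L := by
    apply Real.sSup_le _ hL0
    rintro w ⟨⟨x, y⟩, ⟨hx, hy⟩, rfl⟩
    obtain ⟨ξ, hξ, rfl⟩ := hx
    obtain ⟨η, hη, rfl⟩ := hy
    exact hHat ξ hξ η hη
  have hmem0 : emb i 0 ∈ E := ⟨0, ⟨by norm_num, le_refl _⟩, rfl⟩
  have hmem1 : emb i (-1) ∈ E := ⟨-1, ⟨le_refl _, by norm_num⟩, rfl⟩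
  have hmemE : ((emb i 0, emb i (-1)) : X × X) ∈ E ×ˢ E := ⟨hmem0, hmem1⟩
  have hmemF : ((emb i s, (∞ : X)) : X × X) ∈ frontier G ×ˢ frontier G := by
    rw [Set.mem_prod, hfr]
    exact ⟨frontier_emb_s, frontier_infty hs⟩
  have hlow1 : L ≤ deltaHat G (emb i 0) (emb i (-1)) := by
    have hbdd : BddAbove ((fun p : X × X =>
        Real.log (1 + qCross p.1 (emb i 0) p.2 (emb i (-1)))) ''
        (frontier G ×ˢ frontier G)) := by
      refine ⟨L, ?_⟩
      rintro w ⟨⟨a, b⟩, ⟨ha, hb⟩, rfl⟩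
      exact hlog a ha b hb 0 ⟨by norm_num, le_refl _⟩ (-1) ⟨le_refl _, by norm_num⟩
    have hmem : Real.log (1 + qCross (emb i s) (emb i 0) (∞ : X) (emb i (-1)))
        ≤ deltaHat G (emb i 0) (emb i (-1)) :=
      le_csSup hbdd (Set.mem_image_of_mem _ hmemF)
    rwa [qCross_exact hs] at hmem
  have hlow2 : deltaHat G (emb i 0) (emb i (-1)) ≤ deltaDiam G E := by
    have hbdd : BddAbove ((fun p : X × X => deltaHat G p.1 p.2) '' (E ×ˢ E)) := by
      refine ⟨L, ?_⟩
      rintro w ⟨⟨x, y⟩, ⟨hx, hy⟩, rfl⟩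
      obtain ⟨ξ, hξ, rfl⟩ := hx
      obtain ⟨η, hη, rfl⟩ := hy
      exact hHat ξ hξ η hη
    exact le_csSup hbdd (Set.mem_image_of_mem _ hmemE)
  exact le_antisymm hup (hlow1.trans hlow2)
end
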